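/- (The f=h reciprocity for simplicial complexes.) Let Δ be a simplicial complex of dimension d−1 with h-numbers h_0, …, h_d. Then the polynomial identity ∑_{i=0}^d h_i (1+x)^i x^{d−i} = ∑_{F ∈ Δ} m_F x^{|F|} holds in ℤ[x], where m_F = ∑_{G ∈ Δ, F ⊆ G} (−1)^{d−|G|}. (Equivalently, x^d · h̃((x+1)/x) enumerates the faces of Δ with multiplicity m_F.) -/

import Mathlib

open Polynomial Finset

/-- A (finite, abstract) simplicial complex: a finite collection of finite subsets of `V`
containing the empty set and closed under taking subsets. -/
def IsSimplicialComplex {V : Type*} [DecidableEq V] (Δ : Finset (Finset V)) : Prop :=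
  ∅ ∈ Δ ∧ ∀ F ∈ Δ, ∀ G ⊆ F, G ∈ Δ

/-- `Δ` has dimension `d - 1`: every face has at most `d` elements and some face has
exactly `d` elements. -/
def HasDimension {V : Type*} [DecidableEq V] (Δ : Finset (Finset V)) (d : ℕ) : Prop :=
  (∀ F ∈ Δ, F.card ≤ d) ∧ ∃ F ∈ Δ, F.card = d

/-- `fnum Δ i` is the number of faces of `Δ` with exactly `i` elements, i.e. `f_{i-1}`. -/
def fnum {V : Type*} [DecidableEq V] (Δ : Finset (Finset V)) (i : ℕ) : ℕ :=
  (Δ.filter fun F => F.card = i).card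

/-- The multiplicity `m_F = ∑_{G ∈ Δ, F ⊆ G} (−1)^{d−|G|}` of a face `F` of a complex of
dimension `d − 1` (all faces `G` satisfy `|G| ≤ d`, so `d - G.card` is the usual subtraction). -/
def mult {V : Type*} [DecidableEq V] (Δ : Finset (Finset V)) (d : ℕ) (F : Finset V) : ℤ :=
  ∑ G ∈ Δ.filter (fun G => F ⊆ G), (-1 : ℤ) ^ (d - G.card)

/-- The reduced Euler characteristic `χ̃(Γ) = ∑_{G ∈ Γ} (−1)^{|G|−1}`; the exponent is
written `|G| + 1`, which has the same parity as `|G| − 1` (the empty face contributes `−1`). -/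
def chiTilde {V : Type*} [DecidableEq V] (Γ : Finset (Finset V)) : ℤ :=
  ∑ G ∈ Γ, (-1 : ℤ) ^ (G.card + 1)

/-- The link of a face `F` in `Δ`. -/
def link {V : Type*} [DecidableEq V] (Δ : Finset (Finset V)) (F : Finset V) :
    Finset (Finset V) :=
  Δ.filter fun G => G ∩ F = ∅ ∧ G ∪ F ∈ Δ

/-- `Δ` (of dimension `d − 1`) is reciprocal if `m_F ∈ {0, 1}` for every nonempty face. -/
def IsReciprocal {V : Type*} [DecidableEq V] (Δ : Finset (Finset V)) (d : ℕ) : Prop :=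
  ∀ F ∈ Δ, F ≠ ∅ → mult Δ d F = 0 ∨ mult Δ d F = 1

/-- `Δ` (of dimension `d − 1`) is semi-Eulerian if `m_F = 1` for every nonempty face. -/
def IsSemiEulerian {V : Type*} [DecidableEq V] (Δ : Finset (Finset V)) (d : ℕ) : Prop :=
  ∀ F ∈ Δ, F ≠ ∅ → mult Δ d F = 1

/-- `fint Δ d i` is the number of interior faces (nonempty faces with `m_F = 1`) of `Δ`
with exactly `i` elements, i.e. `f^int_{i-1}`. -/
def fint {V : Type*} [DecidableEq V] (Δ : Finset (Finset V)) (d : ℕ) (i : ℕ) : ℕ :=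
  (Δ.filter fun F => F.card = i ∧ F ≠ ∅ ∧ mult Δ d F = 1).card


lemma reflect_one_add_X_pow (i : ℕ) : reflect i ((1 + X : ℤ[X]) ^ i) = (1 + X) ^ i := by
  induction i with
  | zero => simp
  | succ n ih =>
    have h1 : ((1 + X : ℤ[X])).natDegree ≤ 1 := by
      simpa using natDegree_add_le (1 : ℤ[X]) X
    have hn : (((1 + X : ℤ[X]) ^ n)).natDegree ≤ n :=
      le_trans natDegree_pow_le (by simpa using Nat.mul_le_mul_left n h1)
    rw [pow_succ, reflect_mul _ _ hn h1, ih, reflect_add, reflect_one, reflect_one_X]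
    ring

lemma reflect_sum {α : Type*} (s : Finset α) (f : α → ℤ[X]) (N : ℕ) :
    reflect N (∑ a ∈ s, f a) = ∑ a ∈ s, reflect N (f a) := by
  classical
  induction s using Finset.induction with
  | empty => simp [reflect_zero]
  | insert _ _ hx ih => rw [sum_insert hx, sum_insert hx, reflect_add, ih]

lemma reflect_hterm (d i : ℕ) (hi : i ≤ d) (a : ℤ) :
    reflect d (C a * (1 + X : ℤ[X]) ^ i) = C a * ((1 + X) ^ i * X ^ (d - i)) := by
  rw [reflect_C_mul]
  congr 1
  have h1 : ((1 + X : ℤ[X])).natDegree ≤ 1 := by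
    simpa using natDegree_add_le (1 : ℤ[X]) X
  have hn : (((1 + X : ℤ[X]) ^ i)).natDegree ≤ i :=
    le_trans natDegree_pow_le (by simpa using Nat.mul_le_mul_left i h1)
  have hd : d = i + (d - i) := (Nat.add_sub_cancel' hi).symm
  rw [hd, ← mul_one ((1 + X : ℤ[X]) ^ i),
    reflect_mul _ _ hn (by simp : (1 : ℤ[X]).natDegree ≤ d - i),
    reflect_one_add_X_pow, reflect_one]
  simp

lemma reflect_fterm (d i : ℕ) (hi : i ≤ d) (a : ℤ) :
    reflect d (C a * (1 + X : ℤ[X]) ^ i * X ^ (d - i)) = C a * (1 + X) ^ i := by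
  rw [mul_assoc, reflect_C_mul]
  congr 1
  have h1 : ((1 + X : ℤ[X])).natDegree ≤ 1 := by
    simpa using natDegree_add_le (1 : ℤ[X]) X
  have hn : (((1 + X : ℤ[X]) ^ i)).natDegree ≤ i :=
    le_trans natDegree_pow_le (by simpa using Nat.mul_le_mul_left i h1)
  have hd : d = i + (d - i) := (Nat.add_sub_cancel' hi).symm
  rw [hd, reflect_mul _ _ hn (by simpa using natDegree_X_pow_le (R := ℤ) (d - i)),
    reflect_one_add_X_pow, reflect_monomial]
  simp

lemma one_add_X_pow_card {V : Type*} [DecidableEq V] (G : Finset V) :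
    ((1 : ℤ[X]) + X) ^ G.card = ∑ F ∈ G.powerset, X ^ F.card := by
  have : ∑ F ∈ G.powerset, (X : ℤ[X]) ^ F.card
      = ∑ k ∈ range (G.card + 1), ∑ F ∈ G.powerset.filter (fun F => F.card = k),
          (X : ℤ[X]) ^ F.card := by
    rw [sum_fiberwise_of_maps_to (fun F hF => mem_range.2
      (Nat.lt_succ_of_le (card_le_card (mem_powerset.1 hF))))]
  rw [this, add_comm, add_pow]
  refine Finset.sum_congr rfl fun k hk => ?_
  have : ∀ F ∈ G.powerset.filter (fun F => F.card = k), (X : ℤ[X]) ^ F.card = X ^ k := by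
    intro F hF; rw [(mem_filter.1 hF).2]
  rw [Finset.sum_congr rfl this, sum_const]
  have hcard : (G.powerset.filter (fun F => F.card = k)).card = G.card.choose k := by
    rw [← Finset.powersetCard_eq_filter, Finset.card_powersetCard]
  rw [hcard]
  simp [nsmul_eq_mul, mul_comm]

theorem fh_reciprocity {V : Type*} [DecidableEq V] (Δ : Finset (Finset V)) (d : ℕ)
    (hd : 1 ≤ d) (hΔ : IsSimplicialComplex Δ) (hdim : HasDimension Δ d)
    (h : ℕ → ℤ)
    (hh : (∑ i ∈ range (d + 1), C (h i) * X ^ i : Polynomial ℤ)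
        = ∑ i ∈ range (d + 1), C ((fnum Δ i : ℤ)) * X ^ i * (1 - X) ^ (d - i)) :
    (∑ i ∈ range (d + 1), C (h i) * (1 + X) ^ i * X ^ (d - i) : Polynomial ℤ)
      = ∑ F ∈ Δ, C (mult Δ d F) * X ^ F.card := by
  obtain ⟨hempty, hclosed⟩ := hΔ
  obtain ⟨hcard, -⟩ := hdim
  -- Step 1: substitute X ↦ 1 + X in hh
  have h1 := congrArg (aeval (1 + X : ℤ[X])) hh
  simp only [map_sum, map_mul, map_pow, map_sub, map_add, map_one, aeval_C, aeval_X] at h1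
  have hneg : ((1 : ℤ[X]) - (1 + X)) = -X := by ring
  have hCalg : (algebraMap ℤ ℤ[X]) = C := by ext n; simp
  rw [hneg, hCalg] at h1
  -- h1 : ∑ C (h i) * (1+X)^i = ∑ C fnum * (1+X)^i * (-X)^(d-i)
  -- Step 2: apply reflect d
  have h2 := congrArg (reflect d) h1
  rw [reflect_sum, reflect_sum] at h2
  have hL : ∀ i ∈ range (d + 1),
      reflect d (C (h i) * (1 + X : ℤ[X]) ^ i) = C (h i) * (1 + X) ^ i * X ^ (d - i) := by
    intro i hi
    rw [reflect_hterm d i (Nat.lt_succ_iff.1 (mem_range.1 hi)), mul_assoc]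
  have hR : ∀ i ∈ range (d + 1),
      reflect d (C ((fnum Δ i : ℤ)) * (1 + X : ℤ[X]) ^ i * (-X) ^ (d - i))
        = C ((fnum Δ i : ℤ) * (-1) ^ (d - i)) * (1 + X) ^ i := by
    intro i hi
    have : C ((fnum Δ i : ℤ)) * (1 + X : ℤ[X]) ^ i * (-X) ^ (d - i)
        = C ((fnum Δ i : ℤ) * (-1) ^ (d - i)) * (1 + X) ^ i * X ^ (d - i) := by
      rw [neg_pow]
      simp only [map_mul, map_pow, map_neg, map_one]
      ring
    rw [this, reflect_fterm d i (Nat.lt_succ_iff.1 (mem_range.1 hi))]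
  rw [Finset.sum_congr rfl hL, Finset.sum_congr rfl hR] at h2
  rw [h2]
  -- Step 3: group RHS by faces
  have h3 : ∀ i ∈ range (d + 1),
      (C ((fnum Δ i : ℤ) * (-1) ^ (d - i)) * (1 + X : ℤ[X]) ^ i)
        = ∑ G ∈ Δ.filter (fun G => G.card = i),
            C ((-1 : ℤ) ^ (d - G.card)) * (1 + X) ^ G.card := by
    intro i hi
    have : ∀ G ∈ Δ.filter (fun G => G.card = i),
        C ((-1 : ℤ) ^ (d - G.card)) * ((1 : ℤ[X]) + X) ^ G.card
          = C ((-1 : ℤ) ^ (d - i)) * (1 + X) ^ i := by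
      intro G hG; rw [(mem_filter.1 hG).2]
    rw [Finset.sum_congr rfl this, sum_const, fnum]
    simp [nsmul_eq_mul, mul_assoc]
  rw [Finset.sum_congr rfl h3,
    sum_fiberwise_of_maps_to (fun G hG => mem_range.2 (Nat.lt_succ_of_le (hcard G hG)))]
  -- Now: ∑ G ∈ Δ, C ((-1)^(d - G.card)) * (1+X)^G.card = ∑ F ∈ Δ, C (mult Δ d F) * X^F.card
  have h4 : ∀ G ∈ Δ, C ((-1 : ℤ) ^ (d - G.card)) * ((1 : ℤ[X]) + X) ^ G.card
      = ∑ F ∈ G.powerset, C ((-1 : ℤ) ^ (d - G.card)) * X ^ F.card := by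
    intro G _
    rw [one_add_X_pow_card, mul_sum]
  rw [Finset.sum_congr rfl h4]
  rw [Finset.sum_comm' (t' := Δ) (s' := fun F => Δ.filter (fun G => F ⊆ G)) ?_]
  · refine Finset.sum_congr rfl fun F hF => ?_
    rw [mult, ← sum_mul, map_sum]
  · intro G F
    simp only [mem_powerset, mem_filter]
    constructor
    · rintro ⟨hG, hFG⟩
      exact ⟨⟨hG, hFG⟩, hclosed G hG F hFG⟩
    · rintro ⟨⟨hG, hFG⟩, _⟩
      exact ⟨hG, hFG⟩
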